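/- For any well-founded extensional APG X with carrier in Type u, there exists a well-founded extensional APG Z with carrier in Type u such that for every well-founded extensional APG W with carrier in Type u, W ⋲ Z holds if and only if there exists a well-founded extensional APG V with carrier in Type u such that V ⋲ X and W ⋲ V. (The union axiom holds in the class of well-founded extensional APGs.) -/

import Mathlib

universe u

/-- An accessible pointed graph (APG): a type with a binary relation and a root from
which every node is reachable (backwards along `Relation.ReflTransGen`). -/
structure APG : Type (u + 1) where
  carrier : Type u
  rel : carrier → carrier → Prop
  pt : carrier
  acc : ∀ z : carrier, Relation.ReflTransGen rel z pt

/-- An APG is well-founded if its relation is. -/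
def APG.WF (X : APG.{u}) : Prop := WellFounded X.rel

/-- An APG is extensional if its relation is. -/
def APG.Ext (X : APG.{u}) : Prop :=
  ∀ x y : X.carrier, (∀ z, X.rel z x ↔ X.rel z y) → x = y

/-- Isomorphism of APGs: a relation isomorphism preserving the root. -/
def APG.Iso (X Y : APG.{u}) : Prop :=
  ∃ e : X.rel ≃r Y.rel, e X.pt = Y.pt

private theorem APG.slice_acc {α : Type u} (r : α → α → Prop) (y : α)
    (z : {w : α // Relation.ReflTransGen r w y}) :
    Relation.ReflTransGen (fun a b : {w : α // Relation.ReflTransGen r w y} => r a.1 b.1)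
      z ⟨y, Relation.ReflTransGen.refl⟩ := by
  obtain ⟨a, h⟩ := z
  induction h using Relation.ReflTransGen.head_induction_on with
  | refl => exact Relation.ReflTransGen.refl
  | head h' h ih => exact Relation.ReflTransGen.head h' ih

/-- The sub-APG of `Y` determined by a node `y`: the nodes admitting a path to `y`,
rooted at `y`. -/
def APG.slice (Y : APG.{u}) (y : Y.carrier) : APG.{u} where
  carrier := {z : Y.carrier // Relation.ReflTransGen Y.rel z y}
  rel a b := Y.rel a.1 b.1
  pt := ⟨y, Relation.ReflTransGen.refl⟩
  acc z := APG.slice_acc Y.rel y z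

/-- Membership of APGs: `X ⋲ Y` iff `X` is isomorphic to `Y.slice y` for some member
(child of the root) `y` of `Y`. -/
def APG.Mem (X Y : APG.{u}) : Prop :=
  ∃ y : Y.carrier, Y.rel y Y.pt ∧ APG.Iso X (Y.slice y)

-- ============ auxiliary lemmas ============
open Relation

private theorem apgU_slice_wf (Y : APG.{u}) (h : Y.WF) (y : Y.carrier) : (Y.slice y).WF :=
  InvImage.wf (fun a : {z : Y.carrier // Relation.ReflTransGen Y.rel z y} => a.1) h

private theorem apgU_slice_ext (Y : APG.{u}) (h : Y.Ext) (y : Y.carrier) : (Y.slice y).Ext := by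
  intro a b hab
  apply Subtype.ext
  apply h
  intro w
  constructor
  · intro hw; exact (hab ⟨w, ReflTransGen.head hw a.2⟩).mp hw
  · intro hw; exact (hab ⟨w, ReflTransGen.head hw b.2⟩).mpr hw

private theorem apgU_rtg_subtype {α : Type u} {r : α → α → Prop} {y : α} {a b : α}
    (h : ReflTransGen r a b) (hb : ReflTransGen r b y) :
    ∀ ha : ReflTransGen r a y,
      ReflTransGen (fun p q : {w // ReflTransGen r w y} => r p.1 q.1) ⟨a, ha⟩ ⟨b, hb⟩ := by
  induction h using ReflTransGen.head_induction_on with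
  | refl => intro ha; exact ReflTransGen.refl
  | head h' hcb ih => intro ha; exact ReflTransGen.head h' (ih (hcb.trans hb))

private theorem apgU_slice_slice (Y : APG.{u}) (y : Y.carrier) (w : (Y.slice y).carrier) :
    APG.Iso ((Y.slice y).slice w) (Y.slice w.1) := by
  refine ⟨⟨⟨fun z => ⟨z.1.1, ReflTransGen.lift (fun p : (Y.slice y).carrier => p.1)
      (fun _ _ h => h) _ _ z.2⟩,
    fun z => ⟨⟨z.1, z.2.trans w.2⟩, apgU_rtg_subtype z.2 w.2 _⟩, ?_, ?_⟩, ?_⟩, ?_⟩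
  · intro z; exact Subtype.ext (Subtype.ext rfl)
  · intro z; exact Subtype.ext rfl
  · intro a b; exact Iff.rfl
  · exact Subtype.ext rfl

private theorem apgU_iso_refl (A : APG.{u}) : APG.Iso A A := ⟨RelIso.refl _, rfl⟩

private theorem apgU_iso_symm {A B : APG.{u}} (h : APG.Iso A B) : APG.Iso B A := by
  obtain ⟨e, he⟩ := h
  exact ⟨e.symm, by rw [← he, e.symm_apply_apply]⟩

private theorem apgU_iso_trans {A B C : APG.{u}} (h : APG.Iso A B) (h' : APG.Iso B C) :
    APG.Iso A C := by
  obtain ⟨e, he⟩ := h; obtain ⟨f, hf⟩ := h'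
  exact ⟨e.trans f, by show f (e A.pt) = C.pt; rw [he, hf]⟩

private theorem apgU_iso_slice {A B : APG.{u}} (e : A.rel ≃r B.rel) (a : A.carrier) :
    APG.Iso (A.slice a) (B.slice (e a)) := by
  refine ⟨⟨⟨fun z => ⟨e z.1, ReflTransGen.lift e (fun _ _ h => e.map_rel_iff.mpr h) _ _ z.2⟩,
    fun z => ⟨e.symm z.1, ?_⟩, ?_, ?_⟩, ?_⟩, ?_⟩
  · have := ReflTransGen.lift e.symm (fun _ _ h => e.symm.map_rel_iff.mpr h) _ _ z.2
    rwa [Function.onFun, e.symm_apply_apply] at this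
  · intro z; exact Subtype.ext (e.symm_apply_apply _)
  · intro z; exact Subtype.ext (e.apply_symm_apply _)
  · intro p q; exact e.map_rel_iff
  · exact Subtype.ext rfl

private theorem apgU_mem_iso_right {W A B : APG.{u}} (hAB : APG.Iso A B)
    (h : APG.Mem W A) : APG.Mem W B := by
  obtain ⟨e, he⟩ := hAB
  obtain ⟨a, ha, isoW⟩ := h
  refine ⟨e a, ?_, apgU_iso_trans isoW (apgU_iso_slice e a)⟩
  rw [← he]; exact e.map_rel_iff.mpr ha

private theorem apgU_rhs_char (X : APG.{u}) (hXw : X.WF) (hXe : X.Ext) (W : APG.{u}) :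
    (∃ V : APG.{u}, V.WF ∧ V.Ext ∧ APG.Mem V X ∧ APG.Mem W V) ↔
      ∃ g v, X.rel g v ∧ X.rel v X.pt ∧ APG.Iso W (X.slice g) := by
  constructor
  · rintro ⟨V, _, _, ⟨v, hv, isoV⟩, memWV⟩
    obtain ⟨m, hm, isoW⟩ := apgU_mem_iso_right isoV memWV
    exact ⟨m.1, v, hm, hv, apgU_iso_trans isoW (apgU_slice_slice X v m)⟩
  · rintro ⟨g, v, hgv, hvpt, isoWg⟩
    refine ⟨X.slice v, apgU_slice_wf X hXw v, apgU_slice_ext X hXe v,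
      ⟨v, hvpt, apgU_iso_refl _⟩, ⟨⟨g, ReflTransGen.single hgv⟩, hgv, ?_⟩⟩
    exact apgU_iso_trans isoWg (apgU_iso_symm (apgU_slice_slice X v _))

-- ============ case B construction ============

private def apgU_P (X : APG.{u}) (z : X.carrier) : Prop :=
  ∃ g v, Relation.ReflTransGen X.rel z g ∧ X.rel g v ∧ X.rel v X.pt

private def apgU_Zrel (X : APG.{u}) :
    Option {z : X.carrier // apgU_P X z} → Option {z : X.carrier // apgU_P X z} → Prop
  | some a, some b => X.rel a.1 b.1
  | some a, none => ∃ v, X.rel a.1 v ∧ X.rel v X.pt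
  | none, _ => False

private theorem apgU_Pmono (X : APG.{u}) {x g : X.carrier}
    (h : ReflTransGen X.rel x g) (hg : apgU_P X g) : apgU_P X x := by
  obtain ⟨g', v, h1, h2, h3⟩ := hg
  exact ⟨g', v, h.trans h1, h2, h3⟩

private theorem apgU_up (X : APG.{u}) {x g : X.carrier} (h : ReflTransGen X.rel x g)
    (pg : apgU_P X g) : ∀ px : apgU_P X x,
      ReflTransGen (apgU_Zrel X) (some ⟨x, px⟩) (some ⟨g, pg⟩) := by
  induction h using ReflTransGen.head_induction_on with
  | refl => intro px; exact ReflTransGen.refl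
  | head h' hcb ih =>
    intro px
    exact ReflTransGen.head (show apgU_Zrel X (some ⟨_, px⟩)
      (some ⟨_, apgU_Pmono X hcb pg⟩) from h') (ih _)

private theorem apgU_down (X : APG.{u}) {w : Option {z : X.carrier // apgU_P X z}}
    {p : {z : X.carrier // apgU_P X z}} (h : ReflTransGen (apgU_Zrel X) w (some p)) :
    ∃ q, w = some q ∧ ReflTransGen X.rel q.1 p.1 := by
  induction h using ReflTransGen.head_induction_on with
  | refl => exact ⟨p, rfl, ReflTransGen.refl⟩
  | @head w c h' hcb ih =>
    obtain ⟨q, rfl, hq⟩ := ih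
    match w, h' with
    | some w', h' => exact ⟨w', rfl, ReflTransGen.head h' hq⟩

private def apgU_ZB (X : APG.{u}) : APG.{u} where
  carrier := Option {z : X.carrier // apgU_P X z}
  rel := apgU_Zrel X
  pt := none
  acc z := by
    match z with
    | none => exact Relation.ReflTransGen.refl
    | some ⟨x, px⟩ =>
      obtain ⟨g, v, hxg, hgv, hvpt⟩ := px
      have pg : apgU_P X g := ⟨g, v, Relation.ReflTransGen.refl, hgv, hvpt⟩
      exact (apgU_up X hxg pg _).tail
        (show apgU_Zrel X (some ⟨g, pg⟩) none from ⟨v, hgv, hvpt⟩)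

private theorem apgU_ZB_wf (X : APG.{u}) (h : X.WF) : (apgU_ZB X).WF := by
  have key : ∀ x : X.carrier, ∀ px, Acc (apgU_Zrel X) (some ⟨x, px⟩) := by
    intro x
    refine h.induction (C := fun x => ∀ px, Acc (apgU_Zrel X) (some ⟨x, px⟩)) x
      (fun x ih px => Acc.intro _ fun y hy => ?_)
    match y, hy with
    | some q, hy => exact ih q.1 hy q.2
    | none, hy => exact hy.elim
  constructor
  intro z
  match z with
  | some ⟨x, px⟩ => exact key x px
  | none =>
    refine Acc.intro _ fun y hy => ?_
    match y, hy with
    | some q, hy => exact key q.1 q.2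
    | none, hy => exact hy.elim

private theorem apgU_ZB_ext (X : APG.{u}) (hXe : X.Ext)
    (hB : ¬ ∃ z : X.carrier, ∀ w, X.rel w z ↔ ∃ v, X.rel w v ∧ X.rel v X.pt) :
    (apgU_ZB X).Ext := by
  intro a b hab
  match a, b with
  | none, none => rfl
  | some a, some b =>
    have hval : a.1 = b.1 := by
      apply hXe
      intro w
      constructor
      · intro hw
        exact (hab (some ⟨w, apgU_Pmono X (ReflTransGen.single hw) a.2⟩)).mp hw
      · intro hw
        exact (hab (some ⟨w, apgU_Pmono X (ReflTransGen.single hw) b.2⟩)).mpr hw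
    exact congrArg some (Subtype.ext hval)
  | some a, none =>
    exfalso; apply hB
    refine ⟨a.1, fun w => ⟨fun hw => ?_, fun hw => ?_⟩⟩
    · exact (hab (some ⟨w, apgU_Pmono X (ReflTransGen.single hw) a.2⟩)).mp hw
    · obtain ⟨v, h1, h2⟩ := hw
      exact (hab (some ⟨w, ⟨w, v, ReflTransGen.refl, h1, h2⟩⟩)).mpr ⟨v, h1, h2⟩
  | none, some a =>
    exfalso; apply hB
    refine ⟨a.1, fun w => ⟨fun hw => ?_, fun hw => ?_⟩⟩
    · exact (hab (some ⟨w, apgU_Pmono X (ReflTransGen.single hw) a.2⟩)).mpr hw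
    · obtain ⟨v, h1, h2⟩ := hw
      exact (hab (some ⟨w, ⟨w, v, ReflTransGen.refl, h1, h2⟩⟩)).mp ⟨v, h1, h2⟩

private theorem apgU_ZB_slice_iso (X : APG.{u}) (p : {z : X.carrier // apgU_P X z}) :
    APG.Iso ((apgU_ZB X).slice (some p)) (X.slice p.1) := by
  have down' : ∀ {q : {z : X.carrier // apgU_P X z}},
      ReflTransGen (apgU_Zrel X) (some q) (some p) → ReflTransGen X.rel q.1 p.1 := by
    intro q h
    obtain ⟨q', e, h'⟩ := apgU_down X h
    obtain rfl : q = q' := Option.some.inj e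
    exact h'
  have noneNot : ∀ h : ReflTransGen (apgU_Zrel X) none (some p), False := by
    intro h
    obtain ⟨q', e, _⟩ := apgU_down X h
    exact Option.some_ne_none q' e.symm
  refine ⟨⟨⟨fun z => match z with
      | ⟨some q, hz⟩ => ⟨q.1, down' hz⟩
      | ⟨none, hz⟩ => (noneNot hz).elim,
    fun x => ⟨some ⟨x.1, apgU_Pmono X x.2 p.2⟩, apgU_up X x.2 p.2 _⟩, ?_, ?_⟩, ?_⟩, ?_⟩
  · intro z
    match z with
    | ⟨some q, hz⟩ => exact Subtype.ext (congrArg some (Subtype.ext rfl))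
    | ⟨none, hz⟩ => exact (noneNot hz).elim
  · intro x; exact Subtype.ext rfl
  · intro a b
    match a, b with
    | ⟨some q, ha⟩, ⟨some q', hb⟩ => exact Iff.rfl
    | ⟨none, ha⟩, _ => exact (noneNot ha).elim
    | ⟨some q, ha⟩, ⟨none, hb⟩ => exact (noneNot hb).elim
  · exact Subtype.ext rfl


/-- Union for well-founded extensional APGs. -/
theorem apg_union (X : APG.{u}) (hXw : X.WF) (hXe : X.Ext) :
    ∃ Z : APG.{u}, Z.WF ∧ Z.Ext ∧
      ∀ W : APG.{u}, W.WF → W.Ext →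
        (APG.Mem W Z ↔ ∃ V : APG.{u}, V.WF ∧ V.Ext ∧ APG.Mem V X ∧ APG.Mem W V) := by
  by_cases hA : ∃ z : X.carrier, ∀ w, X.rel w z ↔ ∃ v, X.rel w v ∧ X.rel v X.pt
  · obtain ⟨z, hz⟩ := hA
    refine ⟨X.slice z, apgU_slice_wf X hXw z, apgU_slice_ext X hXe z, fun W _ _ => ?_⟩
    rw [apgU_rhs_char X hXw hXe W]
    constructor
    · rintro ⟨m, hm, iso⟩
      obtain ⟨v, hgv, hvpt⟩ := (hz m.1).mp hm
      exact ⟨m.1, v, hgv, hvpt, apgU_iso_trans iso (apgU_slice_slice X z m)⟩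
    · rintro ⟨g, v, hgv, hvpt, isoWg⟩
      have hgz : X.rel g z := (hz g).mpr ⟨v, hgv, hvpt⟩
      exact ⟨⟨g, ReflTransGen.single hgz⟩, hgz,
        apgU_iso_trans isoWg (apgU_iso_symm (apgU_slice_slice X z _))⟩
  · refine ⟨apgU_ZB X, apgU_ZB_wf X hXw, apgU_ZB_ext X hXe hA, fun W _ _ => ?_⟩
    rw [apgU_rhs_char X hXw hXe W]
    constructor
    · rintro ⟨m, hm, iso⟩
      match m, hm with
      | some p, hm =>
        obtain ⟨v, h1, h2⟩ := hm
        exact ⟨p.1, v, h1, h2, apgU_iso_trans iso (apgU_ZB_slice_iso X p)⟩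
      | none, hm => exact hm.elim
    · rintro ⟨g, v, hgv, hvpt, isoWg⟩
      refine ⟨some ⟨g, ⟨g, v, ReflTransGen.refl, hgv, hvpt⟩⟩,
        ⟨v, hgv, hvpt⟩, apgU_iso_trans isoWg (apgU_iso_symm (apgU_ZB_slice_iso X _))⟩
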